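/- arXiv:1604.01757 — 2 statements merged into one kernel-verified Lean document; each statement's English description precedes it below -/
import Mathlib

section
/- Let S_P be a combinatorial Rees matrix semigroup whose matrix P has one block, witnessed by J ⊆ I and Δ ⊆ Λ (so P(λ,i) = 1 iff (λ,i) ∈ Δ × J). Let n ∈ ℕ, A ⊆ S_P^n, b ∈ S_P^n, b ∉ A, and suppose b is a product g₁⋯g_k of elements of A with k ≥ 2. Let m be such that b(i) ≠ 0 iff i ≤ m, and let d be the product (in any fixed order) of all a ∈ A satisfying a(i) ∈ J × Δ for all i ≤ m. Then g₁ · d · g_k = b. -/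
/-- Elements of the combinatorial Rees matrix semigroup `S_P = (I × Λ) ∪ {0}`. -/
inductive RM (I Λ : Type*) where
  | zero : RM I Λ
  | elt  : I → Λ → RM I Λ

/-- The multiplication of `S_P`: `[i,λ]·[j,μ] = [i,μ]` if `P(λ,j) = 1` and `0` otherwise,
with `0` a zero element. -/
def rmul {I Λ : Type*} (P : Λ → I → Bool) : RM I Λ → RM I Λ → RM I Λ
  | RM.elt i l, RM.elt j m => if P l j then RM.elt i m else RM.zero
  | _, _ => RM.zero


/-- Coordinatewise multiplication on the direct power `S_P ^ n`. -/
def pmul {I Λ : Type*} (P : Λ → I → Bool) {n : ℕ} (a b : Fin n → RM I Λ) : Fin n → RM I Λ :=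
  fun i => rmul P (a i) (b i)


/-- The product `a₁ ⋯ aₖ` of a nonempty list, given as head `a` and tail `l`,
with respect to a multiplication `mul`. -/
def listProd {α : Type*} (mul : α → α → α) : α → List α → α
  | a, [] => a
  | a, b :: l => mul a (listProd mul b l)

section Helper
variable {I Λ : Type*} (P : Λ → I → Bool)

lemma rmul_zero_right (a : RM I Λ) : rmul P a RM.zero = RM.zero := by cases a <;> rfl
lemma rmul_zero_left (a : RM I Λ) : rmul P RM.zero a = RM.zero := by cases a <;> rfl

lemma lp_zero (l : List (RM I Λ)) : listProd (rmul P) RM.zero l = RM.zero := by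
  cases l with
  | nil => rfl
  | cons x l => simp [listProd, rmul_zero_left]

lemma lp_first (l : List (RM I Λ)) : ∀ a, listProd (rmul P) a l = RM.zero ∨
    ∃ i₀ d₀ μ, a = RM.elt i₀ d₀ ∧ listProd (rmul P) a l = RM.elt i₀ μ := by
  induction l with
  | nil =>
    intro a
    cases a with
    | zero => left; rfl
    | elt i l => right; exact ⟨i, l, l, rfl, rfl⟩
  | cons x l ih =>
    intro a
    cases a with
    | zero => left; simp [listProd, rmul_zero_left]
    | elt i0 l0 =>
      rcases ih x with h | ⟨j, lj, μ, hx, h⟩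
      · left; simp [listProd, h, rmul_zero_right]
      · by_cases hp : P l0 j
        · right; exact ⟨i0, l0, μ, rfl, by simp [listProd, h, rmul, hp]⟩
        · left; simp [listProd, h, rmul, hp]

lemma pw {n : ℕ} (gs : List (Fin n → RM I Λ)) : ∀ (g₀ : Fin n → RM I Λ) (i : Fin n),
    listProd (pmul P) g₀ gs i = listProd (rmul P) (g₀ i) (gs.map (· i)) := by
  induction gs with
  | nil => intros; rfl
  | cons x l ih => intro g i; simp [listProd, pmul, ih]

variable (J : Set I) (Δ : Set Λ)
variable (hP : ∀ (l : Λ) (i : I), P l i = true ↔ l ∈ Δ ∧ i ∈ J)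

include hP in
lemma lp_kill (l : List (RM I Λ)) : ∀ a,
    (∃ x ∈ l, x = RM.zero ∨ ∃ j μ, x = RM.elt j μ ∧ j ∉ J) →
    listProd (rmul P) a l = RM.zero := by
  induction l with
  | nil => simp
  | cons y l ih =>
    rintro a ⟨x, hx, hbad⟩
    rcases List.mem_cons.1 hx with rfl | hx
    · rcases hbad with rfl | ⟨j, μ, rfl, hj⟩
      · simp [listProd, lp_zero, rmul_zero_right]
      · rcases lp_first P l (RM.elt j μ) with h | ⟨i0, l0, ν, he, h⟩
        · simp [listProd, h, rmul_zero_right]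
        · injection he with h1 h2
          subst h1
          simp only [listProd, h]
          cases a with
          | zero => exact rmul_zero_left P _
          | elt i' l' =>
            have hp : P l' j = false := by
              rw [Bool.eq_false_iff]
              intro hc
              exact hj ((hP _ _).1 hc).2
            simp [rmul, hp]
    · simp [listProd, ih _ ⟨x, hx, hbad⟩, rmul_zero_right]

include hP in
lemma lp_killhead (l : List (RM I Λ)) (i₀ : I) (d₀ : Λ) (hΔ : d₀ ∉ Δ) (hl : l ≠ []) :
    listProd (rmul P) (RM.elt i₀ d₀) l = RM.zero := by
  cases l with
  | nil => exact absurd rfl hl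
  | cons x l =>
    rcases lp_first P l x with h | ⟨j, lj, μ, hx, h⟩
    · simp [listProd, h, rmul_zero_right]
    · have hp : P d₀ j = false := by
        rw [Bool.eq_false_iff]
        intro hc
        exact hΔ ((hP _ _).1 hc).1
      simp [listProd, h, rmul, hp]

lemma lp_append (l₁ : List (RM I Λ)) : ∀ a x l₂, listProd (rmul P) a (l₁ ++ x :: l₂) =
    listProd (rmul P) a (l₁ ++ [listProd (rmul P) x l₂]) := by
  induction l₁ with
  | nil => intros; simp [listProd]
  | cons y l ih =>
    intro a x l₂
    simp only [List.cons_append, listProd]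
    exact congrArg (rmul P a) (ih y x l₂)

include hP in
lemma lp_killmid (l₁ : List (RM I Λ)) (x : RM I Λ) (l₂ : List (RM I Λ)) (a : RM I Λ)
    (hl₂ : l₂ ≠ []) (j : I) (μ : Λ) (hx : x = RM.elt j μ) (hμ : μ ∉ Δ) :
    listProd (rmul P) a (l₁ ++ x :: l₂) = RM.zero := by
  rw [lp_append]
  have hx0 : listProd (rmul P) x l₂ = RM.zero := by
    subst hx
    exact lp_killhead P J Δ hP l₂ j μ hμ hl₂
  rw [hx0]
  exact lp_kill P J Δ hP _ a ⟨RM.zero, by simp, Or.inl rfl⟩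

include hP in
lemma lp_nz (l : List (RM I Λ)) : ∀ a, listProd (rmul P) a l ≠ RM.zero →
    ∃ i₀ d₀, a = RM.elt i₀ d₀ ∧
      (l ≠ [] → d₀ ∈ Δ) ∧
      (∀ t (ht : t < l.length), ∃ j μ, l[t] = RM.elt j μ ∧ j ∈ J ∧ (t+1 < l.length → μ ∈ Δ)) ∧
      ∃ μl, listProd (rmul P) a l = RM.elt i₀ μl ∧
        ((l = [] ∧ μl = d₀) ∨ (∃ h : l ≠ [], ∃ jl, l.getLast h = RM.elt jl μl)) := by
  induction l with
  | nil =>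
    intro a ha
    cases a with
    | zero => exact absurd rfl ha
    | elt i0 d0 =>
      exact ⟨i0, d0, rfl, by simp, by simp, d0, rfl, Or.inl ⟨rfl, rfl⟩⟩
  | cons x l ih =>
    intro a ha
    cases a with
    | zero => rw [lp_zero] at ha; exact absurd rfl ha
    | elt i0 d0 =>
      have hxl : listProd (rmul P) x l ≠ RM.zero := by
        intro h; apply ha; simp [listProd, h, rmul_zero_right]
      obtain ⟨j1, μ1, hx1, hΔ1, hall, μl, hprod, hlast⟩ := ih x hxl
      have ha' : rmul P (RM.elt i0 d0) (RM.elt j1 μl) ≠ RM.zero := by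
        intro h; apply ha; simp [listProd, hprod, h]
      have hp : P d0 j1 = true := by
        by_contra hc
        rw [Bool.not_eq_true] at hc
        exact ha' (by simp [rmul, hc])
      obtain ⟨hd0, hj1⟩ := (hP _ _).1 hp
      refine ⟨i0, d0, rfl, fun _ => hd0, ?_, μl, ?_, ?_⟩
      · intro t ht
        match t with
        | 0 =>
          refine ⟨j1, μ1, by simpa using hx1, hj1, fun h => hΔ1 ?_⟩
          simp only [List.length_cons] at h
          exact List.length_pos_iff.1 (by omega)
        | Nat.succ s =>
          obtain ⟨j, μ, h1, h2, h3⟩ := hall s (by simpa using ht)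
          exact ⟨j, μ, by simpa using h1, h2, fun h => h3 (by simpa using h)⟩
      · simp [listProd, hprod, rmul, hp]
      · rcases hlast with ⟨hnil, hμ⟩ | ⟨hne, jl, hgl⟩
        · subst hnil
          refine Or.inr ⟨by simp, j1, ?_⟩
          rw [List.getLast_singleton]
          rw [hx1, hμ]
        · exact Or.inr ⟨by simp, jl, by rw [List.getLast_cons hne]; exact hgl⟩

include hP in
lemma lp_z (l : List (RM I Λ)) : ∀ a, listProd (rmul P) a l = RM.zero →
    a = RM.zero ∨
    (∃ i₀ d₀, a = RM.elt i₀ d₀ ∧ l ≠ [] ∧ d₀ ∉ Δ) ∨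
    (∃ t, ∃ ht : t < l.length, l[t] = RM.zero ∨ ∃ j μ, l[t] = RM.elt j μ ∧ j ∉ J) ∨
    (∃ t, ∃ ht : t < l.length, t+1 < l.length ∧ ∃ j μ, l[t] = RM.elt j μ ∧ μ ∉ Δ) := by
  induction l with
  | nil => intro a ha; left; exact ha
  | cons x l ih =>
    intro a ha
    cases a with
    | zero => left; rfl
    | elt i0 d0 =>
      right
      by_cases hxl : listProd (rmul P) x l = RM.zero
      · rcases ih x hxl with h0 | ⟨j, d, hx, hl, hd⟩ | ⟨t, ht, hbad⟩ | ⟨t, ht, h1, j, μ, he, hd⟩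
        · right; left; exact ⟨0, by simp, Or.inl (by simpa using h0)⟩
        · right; right
          refine ⟨0, by simp, ?_, j, d, by simpa using hx, hd⟩
          simpa using List.length_pos_iff.2 hl
        · right; left
          exact ⟨t+1, by simpa using ht, by simpa using hbad⟩
        · right; right
          exact ⟨t+1, by simpa using ht, by simpa using h1, j, μ, by simpa using he, hd⟩
      · rcases lp_first P l x with h | ⟨j, dj, μ, hx, h⟩
        · exact absurd h hxl
        · rw [listProd, h] at ha
          by_cases hp : P d0 j
          · rw [rmul, if_pos hp] at ha; exact absurd ha (by simp)
          · have hor : d0 ∉ Δ ∨ j ∉ J := by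
              by_contra hc
              push_neg at hc
              exact hp ((hP d0 j).2 ⟨hc.1, hc.2⟩)
            rcases hor with h1 | h1
            · left; exact ⟨i0, d0, rfl, by simp, h1⟩
            · right; left; exact ⟨0, by simp, Or.inr ⟨j, dj, by simpa using hx, h1⟩⟩

include hP in
lemma lp_formula (l : List (RM I Λ)) : ∀ (i₀ : I) (d₀ : Λ),
    (l ≠ [] → d₀ ∈ Δ) →
    (∀ t (ht : t < l.length), ∃ j μ, l[t] = RM.elt j μ ∧ j ∈ J ∧ (t+1 < l.length → μ ∈ Δ)) →
    ∀ μl, (l = [] → μl = d₀) → (∀ h : l ≠ [], ∃ jl, l.getLast h = RM.elt jl μl) →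
    listProd (rmul P) (RM.elt i₀ d₀) l = RM.elt i₀ μl := by
  induction l with
  | nil =>
    intro i₀ d₀ _ _ μl hμ _
    rw [hμ rfl]; rfl
  | cons x l ih =>
    intro i₀ d₀ hΔ hall μl _ hlast
    obtain ⟨j1, μ1, hx, hj1, hμ1⟩ := hall 0 (by simp)
    rw [List.getElem_cons_zero] at hx
    have htail : listProd (rmul P) x l = RM.elt j1 μl := by
      rw [hx]
      apply ih j1 μ1
      · intro hl
        apply hμ1
        simpa using List.length_pos_iff.2 hl
      · intro t ht
        obtain ⟨j, μ, h1, h2, h3⟩ := hall (t+1) (by simpa using ht)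
        exact ⟨j, μ, by simpa using h1, h2, fun h => h3 (by simpa using h)⟩
      · intro hl
        subst hl
        obtain ⟨jl, hgl⟩ := hlast (by simp)
        rw [List.getLast_singleton, hx] at hgl
        injection hgl with e1 e2
        exact e2.symm
      · intro hl
        obtain ⟨jl, hgl⟩ := hlast (by simp)
        rw [List.getLast_cons hl] at hgl
        exact ⟨jl, hgl⟩
    have hp : P d₀ j1 = true := (hP _ _).2 ⟨hΔ (by simp), hj1⟩
    simp [listProd, htail, rmul, hp]

end Helper

/-- Correctness of the key step of the polynomial-time algorithm: if `P` has one block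
(witnessed by `J ⊆ I`, `Δ ⊆ Λ`), `b ∉ A` is a product `g₁ ⋯ g_k` (`k ≥ 2`) of elements of
`A ⊆ S_P ^ n`, the nonzero coordinates of `b` are exactly those `< m`, and `L` enumerates
(without repetition, in some fixed order) those `a ∈ A` with `a i ∈ J × Δ` for all `i < m`,
then `g₁ · d · g_k = b` where `d` is the product of `L`. -/
theorem stmt_11 {I Λ : Type*} (P : Λ → I → Bool) (J : Set I) (Δ : Set Λ)
    (hP : ∀ (l : Λ) (i : I), P l i = true ↔ l ∈ Δ ∧ i ∈ J)
    (n : ℕ) (A : Set (Fin n → RM I Λ)) (b : Fin n → RM I Λ) (hbA : b ∉ A)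
    (g₀ : Fin n → RM I Λ) (gs : List (Fin n → RM I Λ)) (hgs : gs ≠ [])
    (hg₀ : g₀ ∈ A) (hgsA : ∀ x ∈ gs, x ∈ A)
    (hb : listProd (pmul P) g₀ gs = b)
    (m : ℕ) (hm : ∀ i : Fin n, b i ≠ RM.zero ↔ (i : ℕ) < m)
    (L : List (Fin n → RM I Λ)) (hnd : L.Nodup)
    (hL : ∀ x, x ∈ L ↔ x ∈ A ∧ ∀ i : Fin n, (i : ℕ) < m →
      ∃ j ∈ J, ∃ d ∈ Δ, x i = RM.elt j d) :
    listProd (pmul P) g₀ (L ++ [gs.getLast hgs]) = b := by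
  classical
  have hbp : ∀ i : Fin n, listProd (rmul P) (g₀ i) (gs.map (· i)) = b i := by
    intro i; rw [← pw]; exact congrFun hb i
  have hchain : ∀ i : Fin n, (i : ℕ) < m →
      ∃ i₀ d₀, g₀ i = RM.elt i₀ d₀ ∧
        (gs.map (· i) ≠ [] → d₀ ∈ Δ) ∧
        (∀ t (ht : t < (gs.map (· i)).length), ∃ j μ, (gs.map (· i))[t] = RM.elt j μ ∧ j ∈ J ∧
          (t+1 < (gs.map (· i)).length → μ ∈ Δ)) ∧
        ∃ μl, listProd (rmul P) (g₀ i) (gs.map (· i)) = RM.elt i₀ μl ∧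
          ((gs.map (· i) = [] ∧ μl = d₀) ∨
            (∃ h : gs.map (· i) ≠ [], ∃ jl, (gs.map (· i)).getLast h = RM.elt jl μl)) := by
    intro i hi
    exact lp_nz P J Δ hP _ (g₀ i) (by rw [hbp i]; exact (hm i).2 hi)
  have hmem : ∀ t (ht : t < gs.length), t + 1 < gs.length → gs[t] ∈ L := by
    intro t ht h1
    rw [hL]
    refine ⟨hgsA _ (List.getElem_mem ht), ?_⟩
    intro i hi
    obtain ⟨i0, d0, hg0, hΔ0, hall, _⟩ := hchain i hi
    obtain ⟨j, μ, he, hj, hμ⟩ := hall t (by simpa using ht)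
    rw [List.getElem_map] at he
    exact ⟨j, hj, μ, hμ (by simpa using h1), he⟩
  funext i
  rw [pw]
  by_cases hi : (i : ℕ) < m
  · obtain ⟨i0, d0, hg0, hΔ0, hall, μl, hprod, hlast⟩ := hchain i hi
    have hbi : b i = RM.elt i0 μl := by rw [← hbp i, hprod]
    rcases hlast with ⟨hnil, _⟩ | ⟨hne, jl, hgl⟩
    · exact absurd hnil (by simp [hgs])
    · have e1 : (gs.map (· i)).getLast hne = gs.getLast hgs i := by
        simp [List.getLast_eq_getElem]
      have hgk : gs.getLast hgs i = RM.elt jl μl := by rw [← e1]; exact hgl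
      have hjl : jl ∈ J := by
        have hlen : gs.length - 1 < gs.length := by
          have := List.length_pos_iff.2 hgs; omega
        obtain ⟨j, μ, he, hj, _⟩ := hall (gs.length - 1) (by simpa using hlen)
        rw [List.getElem_map] at he
        have e2 : gs[gs.length - 1] = gs.getLast hgs := (List.getLast_eq_getElem hgs).symm
        rw [e2, hgk] at he
        injection he with e3 e4
        rw [e3]; exact hj
      rw [hbi, hg0]
      apply lp_formula P J Δ hP _ i0 d0
      · intro _; exact hΔ0 (by simp [hgs])
      · intro t ht
        have ht2 : t < L.length + 1 := by simpa using ht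
        rw [List.getElem_map]
        by_cases h2 : t < L.length
        · have hxlen : t < (L ++ [gs.getLast hgs]).length := by
            rw [List.length_append]
            exact Nat.lt_add_right _ h2
          have he : (L ++ [gs.getLast hgs])[t]'hxlen = L[t]'h2 :=
            List.getElem_append_left h2
          have hmemL : L[t] ∈ L := List.getElem_mem h2
          obtain ⟨j, hj, d, hd, hxi⟩ := ((hL _).1 hmemL).2 i hi
          rw [he]
          exact ⟨j, d, hxi, hj, fun _ => hd⟩
        · have ht' : t = L.length :=
            Nat.le_antisymm (Nat.lt_succ_iff.1 ht2) (Nat.not_lt.1 h2)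
          subst ht'
          have he : (L ++ [gs.getLast hgs])[L.length] = gs.getLast hgs := by
            simp
          rw [he, hgk]
          refine ⟨jl, μl, rfl, hjl, fun h => ?_⟩
          simp at h
      · intro h; simp at h
      · intro h
        refine ⟨jl, ?_⟩
        rw [List.getLast_map, List.getLast_concat]
        exact hgk
  · have hb0 : b i = RM.zero := by
      by_contra h; exact hi ((hm i).1 h)
    have h0 : listProd (rmul P) (g₀ i) (gs.map (· i)) = RM.zero := by rw [hbp i, hb0]
    rw [hb0]
    rcases lp_z P J Δ hP _ _ h0 with hg00 | ⟨i0, d0, hg0e, _, hd0⟩ |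
      ⟨t, ht, hbad⟩ | ⟨t, ht, h1, j, μ, he, hμ⟩
    · rw [hg00]; exact lp_zero P _
    · rw [hg0e]; exact lp_killhead P J Δ hP _ i0 d0 hd0 (by simp)
    · have ht' : t < gs.length := by simpa using ht
      rw [List.getElem_map] at hbad
      have hmem2 : gs[t] ∈ L ++ [gs.getLast hgs] := by
        by_cases h2 : t + 1 < gs.length
        · exact List.mem_append_left _ (hmem t ht' h2)
        · have ht'' : t = gs.length - 1 :=
            Nat.le_antisymm (Nat.le_sub_one_of_lt ht') (Nat.sub_le_of_le_add (Nat.not_lt.1 h2))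
          have : gs[t] = gs.getLast hgs := by
            rw [List.getLast_eq_getElem]
            congr 1
          rw [this]
          exact List.mem_append_right _ (by simp)
      exact lp_kill P J Δ hP _ _ ⟨gs[t] i, List.mem_map_of_mem hmem2, hbad⟩
    · have ht' : t < gs.length := by simpa using ht
      have h1' : t + 1 < gs.length := by simpa using h1
      rw [List.getElem_map] at he
      obtain ⟨L₁, L₂, hLdec⟩ := List.append_of_mem (hmem t ht' h1')
      have hdec : (L ++ [gs.getLast hgs]).map (· i) =
          (L₁.map (· i)) ++ (gs[t] i) :: ((L₂ ++ [gs.getLast hgs]).map (· i)) := by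
        rw [hLdec]; simp
      rw [hdec]
      exact lp_killmid P J Δ hP _ _ _ _ (by simp) j μ he hμ
end

section
/- Let S be a finite semigroup and s, t ∈ S such that sts = s and s does not generate a group. Then in S × S, the elements s' = (s, tst) and t' = (tst, s) satisfy: s't's' = s', t's't' = t', neither s' nor t' generates a group, and s'², t'² are strictly J-below s' in S × S. -/
/-- `a ≤_J b` in a semigroup `S`: the principal ideal condition `S¹aS¹ ⊆ S¹bS¹`,
i.e. `a = u * b * v` for some `u v ∈ S¹`. -/
def JLe {S : Type*} [Semigroup S] (a b : S) : Prop :=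
  ∃ u v : WithOne S, (a : WithOne S) = u * (b : WithOne S) * v

/-- Green's `J`-equivalence. -/
def JEquiv {S : Type*} [Semigroup S] (a b : S) : Prop := JLe a b ∧ JLe b a

/-- `a` is strictly `J`-below `b`. -/
def JLt {S : Type*} [Semigroup S] (a b : S) : Prop := JLe a b ∧ ¬ JLe b a

/-- `s` generates a group: the cyclic subsemigroup generated by `s` is a group,
i.e. it contains a two-sided identity and inverses. -/
def GeneratesGroup {S : Type*} [Semigroup S] (s : S) : Prop :=
  ∃ e ∈ Subsemigroup.closure {s},
    (∀ x ∈ Subsemigroup.closure {s}, e * x = x ∧ x * e = x) ∧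
    ∀ x ∈ Subsemigroup.closure {s}, ∃ y ∈ Subsemigroup.closure {s}, x * y = e ∧ y * x = e

section Aux

variable {S : Type*} [Semigroup S]

instance withOneFinite {S : Type*} [Finite S] : Finite (WithOne S) :=
  Finite.of_equiv (S ⊕ PUnit.{1}) (Equiv.optionEquivSumPUnit S).symm

/-- `spowAux a n = a^(n+1)` in a semigroup. -/
def spowAux (a : S) : ℕ → S
  | 0 => a
  | n + 1 => spowAux a n * a

lemma spowAux_add (a : S) (i j : ℕ) : spowAux a (i + j + 1) = spowAux a i * spowAux a j := by
  induction j with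
  | zero => rfl
  | succ j ih =>
      show spowAux a ((i + j + 1) + 1) = spowAux a i * spowAux a (j + 1)
      rw [show spowAux a ((i + j + 1) + 1) = spowAux a (i + j + 1) * a from rfl, ih,
        mul_assoc]
      rfl

lemma spowAux_mem (a : S) (n : ℕ) : spowAux a n ∈ Subsemigroup.closure {a} := by
  induction n with
  | zero => exact Subsemigroup.subset_closure rfl
  | succ n ih => exact Subsemigroup.mul_mem _ ih (Subsemigroup.subset_closure rfl)

lemma mem_closure_iff_spowAux (a x : S) :
    x ∈ Subsemigroup.closure {a} ↔ ∃ n, x = spowAux a n := by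
  constructor
  · intro h
    induction h using Subsemigroup.closure_induction with
    | mem y hy => exact ⟨0, hy.symm ▸ rfl⟩
    | mul y z hy hz ihy ihz =>
        obtain ⟨i, rfl⟩ := ihy
        obtain ⟨j, rfl⟩ := ihz
        exact ⟨i + j + 1, (spowAux_add a i j).symm⟩
  · rintro ⟨n, rfl⟩
    exact spowAux_mem a n

lemma spowAux_cycle_step (a : S) (m : ℕ) (h : spowAux a (m + 1) = a) :
    ∀ k, spowAux a (k + (m + 1)) = spowAux a k := by
  intro k
  cases k with
  | zero => rw [Nat.zero_add]; exact h
  | succ j =>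
      have h1 : j + 1 + (m + 1) = (m + 1) + j + 1 := by omega
      have h2 : (j : ℕ) + 1 = 0 + j + 1 := by omega
      rw [h1, spowAux_add, h, h2, spowAux_add]
      rfl

lemma spowAux_cycle (a : S) (m : ℕ) (h : spowAux a (m + 1) = a) :
    ∀ c k, spowAux a (k + c * (m + 1)) = spowAux a k := by
  intro c
  induction c with
  | zero => intro k; simp
  | succ c ih =>
      intro k
      have he : k + (c + 1) * (m + 1) = (k + c * (m + 1)) + (m + 1) := by ring
      rw [he, spowAux_cycle_step a m h, ih]

lemma generatesGroup_of_spowAux (a : S) (m : ℕ) (h : spowAux a (m + 1) = a) :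
    GeneratesGroup a := by
  refine ⟨spowAux a m, spowAux_mem a m, ?_, ?_⟩
  · intro x hx
    obtain ⟨k, rfl⟩ := (mem_closure_iff_spowAux a x).1 hx
    constructor
    · rw [← spowAux_add]
      have he : m + k + 1 = k + 1 * (m + 1) := by ring
      rw [he, spowAux_cycle a m h]
    · rw [← spowAux_add]
      have he : k + m + 1 = k + 1 * (m + 1) := by ring
      rw [he, spowAux_cycle a m h]
  · intro x hx
    obtain ⟨k, rfl⟩ := (mem_closure_iff_spowAux a x).1 hx
    refine ⟨spowAux a (m * (k + 2)), spowAux_mem _ _, ?_, ?_⟩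
    · rw [← spowAux_add]
      have he : k + m * (k + 2) + 1 = m + (k + 1) * (m + 1) := by ring
      rw [he, spowAux_cycle a m h]
    · rw [← spowAux_add]
      have he : m * (k + 2) + k + 1 = m + (k + 1) * (m + 1) := by ring
      rw [he, spowAux_cycle a m h]

lemma spowAux_of_generatesGroup (a : S) (h : GeneratesGroup a) :
    ∃ m, spowAux a (m + 1) = a := by
  obtain ⟨e, he, hid, -⟩ := h
  obtain ⟨m, rfl⟩ := (mem_closure_iff_spowAux a e).1 he
  exact ⟨m, (hid a (Subsemigroup.subset_closure rfl)).1⟩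

lemma spowAux_fst (p : S × S) (n : ℕ) : (spowAux p n).1 = spowAux p.1 n := by
  induction n with
  | zero => rfl
  | succ n ih =>
      show (spowAux p n * p).1 = spowAux p.1 n * p.1
      rw [Prod.fst_mul, ih]

lemma spowAux_snd (p : S × S) (n : ℕ) : (spowAux p n).2 = spowAux p.2 n := by
  induction n with
  | zero => rfl
  | succ n ih =>
      show (spowAux p n * p).2 = spowAux p.2 n * p.2
      rw [Prod.snd_mul, ih]

lemma coe_spowAux (a : S) (n : ℕ) :
    ((spowAux a n : S) : WithOne S) = (a : WithOne S) ^ (n + 1) := by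
  induction n with
  | zero => rw [pow_one]; rfl
  | succ n ih =>
      show ((spowAux a n * a : S) : WithOne S) = _
      rw [WithOne.coe_mul, ih, ← pow_succ]

end Aux

section Pump

variable {M : Type*} [Monoid M] [Finite M]

lemma exists_pow_stable (x : M) : ∃ n, 1 ≤ n ∧ x ^ (2 * n) = x ^ n := by
  obtain ⟨i, j, hij, h⟩ : ∃ i j, i < j ∧ x ^ i = x ^ j := by
    obtain ⟨i, j, hne, h⟩ := Finite.exists_ne_map_eq_of_infinite (fun n : ℕ => x ^ n)
    rcases hne.lt_or_gt with hlt | hlt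
    · exact ⟨i, j, hlt, h⟩
    · exact ⟨j, i, hlt, h.symm⟩
  set p := j - i with hp
  have hp1 : 1 ≤ p := by omega
  have hstep : ∀ k, i ≤ k → x ^ (k + p) = x ^ k := by
    intro k hk
    have he : k + p = (k - i) + j := by omega
    rw [he, pow_add, ← h, ← pow_add]
    congr 1
    omega
  have hcyc : ∀ c k, i ≤ k → x ^ (k + c * p) = x ^ k := by
    intro c
    induction c with
    | zero => intro k _; simp
    | succ c ih =>
        intro k hk
        have he : k + (c + 1) * p = (k + c * p) + p := by ring
        rw [he, hstep _ (by omega), ih k hk]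
  refine ⟨(i + 1) * p, by nlinarith, ?_⟩
  have he : 2 * ((i + 1) * p) = (i + 1) * p + (i + 1) * p := by ring
  rw [he, hcyc (i + 1) ((i + 1) * p) (by nlinarith)]

omit [Finite M] in
lemma pump_aux (a u v : M) (h : a = u * (a * a) * v) :
    ∀ n, a = u ^ n * a * (a * v) ^ n := by
  intro n
  induction n with
  | zero => simp
  | succ n ih =>
      calc a = u ^ n * a * (a * v) ^ n := ih
        _ = u ^ n * (u * (a * a) * v) * (a * v) ^ n := by rw [← h]
        _ = u ^ (n + 1) * a * (a * v) ^ (n + 1) := by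
            rw [pow_succ u n, pow_succ' (a * v) n]
            simp only [mul_assoc]

lemma pump_right (a u v : M) (h : a = u * (a * a) * v) :
    ∃ w : M, a = a * a * w := by
  obtain ⟨n, hn1, hn⟩ := exists_pow_stable (a * v)
  have h2 := congrArg (fun z => z * (a * v) ^ n) (pump_aux a u v h n)
  rw [mul_assoc (u ^ n * a) ((a * v) ^ n) ((a * v) ^ n), ← pow_add,
    show n + n = 2 * n from by ring, hn, ← pump_aux a u v h n] at h2
  obtain ⟨m, rfl⟩ : ∃ m, n = m + 1 := ⟨n - 1, by omega⟩
  refine ⟨v * (a * v) ^ m, ?_⟩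
  calc a = a * (a * v) ^ (m + 1) := h2.symm
    _ = a * a * (v * (a * v) ^ m) := by
        rw [pow_succ' (a * v) m]
        simp only [mul_assoc]

lemma pump (a u v : M) (h : a = u * (a * a) * v) : ∃ m, a ^ (m + 2) = a := by
  obtain ⟨w, hw⟩ := pump_right a u v h
  have hpow : ∀ n, a = a ^ (n + 1) * w ^ n := by
    intro n
    induction n with
    | zero => simp
    | succ n ih =>
        calc a = a ^ (n + 1) * w ^ n := ih
          _ = a ^ n * a * w ^ n := by rw [pow_succ]
          _ = a ^ n * (a * a * w) * w ^ n := by rw [← hw]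
          _ = a ^ (n + 2) * w ^ (n + 1) := by
              rw [pow_succ a (n + 1), pow_succ a n, pow_succ' w n]
              simp only [mul_assoc]
  obtain ⟨k, hk1, hk⟩ := exists_pow_stable a
  obtain ⟨k', rfl⟩ : ∃ k', k = k' + 1 := ⟨k - 1, by omega⟩
  refine ⟨k', ?_⟩
  have h1 : a = a ^ (k' + 2) * w ^ (k' + 1) := hpow (k' + 1)
  have h2 : a ^ (k' + 2) = a ^ (k' + 1) * a ^ (k' + 2) := by
    calc a ^ (k' + 2) = a * a ^ (k' + 1) := pow_succ' a (k' + 1)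
      _ = a * a ^ (2 * (k' + 1)) := by rw [hk]
      _ = a ^ (2 * (k' + 1) + 1) := (pow_succ' a _).symm
      _ = a ^ (k' + 1) * a ^ (k' + 2) := by
          have he : 2 * (k' + 1) + 1 = (k' + 1) + (k' + 2) := by ring
          rw [he, pow_add]
  calc a ^ (k' + 2) = a ^ (k' + 1) * a := pow_succ a (k' + 1)
    _ = a ^ (k' + 1) * (a ^ (k' + 2) * w ^ (k' + 1)) := by rw [← h1]
    _ = (a ^ (k' + 1) * a ^ (k' + 2)) * w ^ (k' + 1) := by rw [mul_assoc]
    _ = a ^ (k' + 2) * w ^ (k' + 1) := by rw [← h2]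
    _ = a := h1.symm

end Pump

lemma generatesGroup_of_sq_above {S : Type*} [Semigroup S] [Finite S] (a : S)
    (h : ∃ u v : WithOne S, (a : WithOne S) = u * ((a : WithOne S) * a) * v) :
    GeneratesGroup a := by
  obtain ⟨u, v, huv⟩ := h
  obtain ⟨m, hm⟩ := pump (a : WithOne S) u v huv
  have hc : ((spowAux a (m + 1) : S) : WithOne S) = (a : WithOne S) := by
    rw [coe_spowAux]; exact hm
  exact generatesGroup_of_spowAux a m (WithOne.coe_inj.1 hc)

lemma generatesGroup_fst {S : Type*} [Semigroup S] (p : S × S)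
    (h : GeneratesGroup p) : GeneratesGroup p.1 := by
  obtain ⟨m, hm⟩ := spowAux_of_generatesGroup p h
  exact generatesGroup_of_spowAux p.1 m (by rw [← spowAux_fst, hm])

lemma generatesGroup_snd {S : Type*} [Semigroup S] (p : S × S)
    (h : GeneratesGroup p) : GeneratesGroup p.2 := by
  obtain ⟨m, hm⟩ := spowAux_of_generatesGroup p h
  exact generatesGroup_of_spowAux p.2 m (by rw [← spowAux_snd, hm])

/-- If `sts = s` in a finite semigroup and `s` does not generate a group, then in `S × S`
the elements `s' = (s, tst)` and `t' = (tst, s)` satisfy `s't's' = s'`, `t's't' = t'`,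
neither generates a group, and `s'²`, `t'²` are strictly `J`-below `s'`. -/
theorem stmt_16 {S : Type*} [Semigroup S] [Finite S] (s t : S)
    (h1 : s * t * s = s) (hng : ¬ GeneratesGroup s) :
    let s' : S × S := (s, t * s * t)
    let t' : S × S := (t * s * t, s)
    s' * t' * s' = s' ∧ t' * s' * t' = t' ∧
      ¬ GeneratesGroup s' ∧ ¬ GeneratesGroup t' ∧
      JLt (s' * s') s' ∧ JLt (t' * t') s' := by
  intro s' t'
  have h1' : s * (t * s) = s := by rw [← mul_assoc]; exact h1
  have key : ∀ x : S, s * (t * (s * x)) = s * x := fun x => by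
    rw [← mul_assoc, ← mul_assoc, h1]
  have hA : s * (t * s * t) * s = s := by
    simp only [mul_assoc, h1', key]
  have hB : (t * s * t) * s * (t * s * t) = t * s * t := by
    simp only [mul_assoc, h1', key]
  have e1 : s' * t' * s' = s' := Prod.ext hA hB
  have e2 : t' * s' * t' = t' := Prod.ext hB hA
  have hngs' : ¬ GeneratesGroup s' := fun h => hng (generatesGroup_fst s' h)
  have hngt' : ¬ GeneratesGroup t' := fun h => hng (generatesGroup_snd t' h)
  refine ⟨e1, e2, hngs', hngt', ⟨?_, ?_⟩, ⟨?_, ?_⟩⟩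
  · exact ⟨(s' : WithOne (S × S)), 1, by rw [WithOne.coe_mul, mul_one]⟩
  · rintro ⟨u, v, hu⟩
    rw [WithOne.coe_mul] at hu
    exact hngs' (generatesGroup_of_sq_above s' ⟨u, v, hu⟩)
  · refine ⟨(t' : WithOne (S × S)), ((t' * t' : S × S) : WithOne (S × S)), ?_⟩
    rw [← WithOne.coe_mul, ← WithOne.coe_mul, WithOne.coe_inj]
    calc t' * t' = (t' * s' * t') * t' := by rw [e2]
      _ = t' * s' * (t' * t') := by rw [mul_assoc]
  · rintro ⟨u, v, hu⟩
    rw [WithOne.coe_mul] at hu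
    have e : (t' : WithOne (S × S)) = (t' : WithOne (S × S)) * s' * t' := by
      rw [← WithOne.coe_mul, ← WithOne.coe_mul, e2]
    rw [hu] at e
    refine hngt' (generatesGroup_of_sq_above t'
      ⟨(t' : WithOne (S × S)) * u, v * (t' : WithOne (S × S)), ?_⟩)
    calc (t' : WithOne (S × S)) = ↑t' * (u * (↑t' * ↑t') * v) * ↑t' := e
      _ = (↑t' * u) * (↑t' * ↑t') * (v * ↑t') := by simp only [mul_assoc]
end
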